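/- For integers m ≥ 0 and z ≠ 0, the derivative recurrence ∂_z 𝐃_m(z) = 𝐃_{m+1}(z) − 𝐅_m(z)/z holds. -/

import Mathlib

open Complex

/-- The digamma function `ψ = Γ'/Γ`. -/
noncomputable def _root_.digamma (z : ℂ) : ℂ := deriv Complex.Gamma z / Complex.Gamma z

/-- The normalized ₀F₁ function with integer parameter: `𝐅_m(z) = ∑ zⁿ/((m+n)!·n!)`. -/
noncomputable def Fm (m : ℕ) (z : ℂ) : ℂ :=
  ∑' n : ℕ, z ^ n / ((m + n).factorial * n.factorial)

/-- `𝐃_m(z) = ∑_{k=1}^m (−1)^{k−1}(k−1)!/(m−k)!·z^{−k}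
      − ∑_{k≥0} (ψ(k+1)+ψ(k+m+1))/(k!(m+k)!)·z^k`. -/
noncomputable def Dm (m : ℕ) (z : ℂ) : ℂ :=
  (∑ k ∈ Finset.Icc 1 m,
      (-1 : ℂ) ^ (k - 1) * (k - 1).factorial / (m - k).factorial * z ^ (-(k : ℤ)))
  - ∑' k : ℕ, (_root_.digamma (k + 1) + _root_.digamma (k + m + 1)) / (k.factorial * (m + k).factorial) * z ^ k

lemma nat_succ_ne_neg (n : ℕ) : ∀ m : ℕ, (n : ℂ) + 1 ≠ -m := by
  intro m h
  have := congrArg Complex.re h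
  simp at this
  have h0 : (0:ℝ) ≤ (n:ℝ) := Nat.cast_nonneg n
  have h1 : (0:ℝ) ≤ (m:ℝ) := Nat.cast_nonneg m
  linarith

lemma digamma_succ (n : ℕ) :
    _root_.digamma ((n : ℂ) + 2) = _root_.digamma ((n : ℂ) + 1) + 1 / ((n : ℂ) + 1) := by
  set w : ℂ := (n : ℂ) + 1 with hw
  have hw0 : w ≠ 0 := by
    simpa using nat_succ_ne_neg n 0
  have hne : ∀ m : ℕ, w ≠ -m := nat_succ_ne_neg n
  have hne' : ∀ m : ℕ, w + 1 ≠ -m := by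
    intro m
    have := nat_succ_ne_neg (n + 1) m
    push_cast at this ⊢
    intro h; apply this; rw [← h]
  have hG : Complex.Gamma w ≠ 0 := Complex.Gamma_ne_zero hne
  have hd : HasDerivAt Complex.Gamma (deriv Complex.Gamma w) w :=
    (Complex.differentiableAt_Gamma w hne).hasDerivAt
  have hd1 : HasDerivAt Complex.Gamma (deriv Complex.Gamma (w + 1)) (w + 1) :=
    (Complex.differentiableAt_Gamma (w + 1) hne').hasDerivAt
  -- f x = Gamma (x+1), derivative at w is deriv Gamma (w+1)
  have hf : HasDerivAt (fun x : ℂ => Complex.Gamma (x + 1)) (deriv Complex.Gamma (w + 1)) w := by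
    have := hd1.comp w ((hasDerivAt_id w).add_const 1); rw [mul_one] at this; exact this
  -- g x = x * Gamma x
  have hg : HasDerivAt (fun x : ℂ => x * Complex.Gamma x)
      (Complex.Gamma w + w * deriv Complex.Gamma w) w := by
    have := (hasDerivAt_id w).mul hd
    rw [one_mul] at this; exact this
  have hev : (fun x : ℂ => Complex.Gamma (x + 1)) =ᶠ[nhds w] fun x => x * Complex.Gamma x := by
    filter_upwards [isOpen_ne.mem_nhds hw0] with x hx
    exact Complex.Gamma_add_one x hx
  have hkey : deriv Complex.Gamma (w + 1) = Complex.Gamma w + w * deriv Complex.Gamma w :=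
    hf.unique (hg.congr_of_eventuallyEq hev)
  have h2 : ((n : ℂ) + 2) = w + 1 := by rw [hw]; ring
  rw [h2]
  unfold _root_.digamma
  rw [hkey, Complex.Gamma_add_one w hw0]
  field_simp
  ring

lemma digamma_nat_bound (k : ℕ) :
    ‖_root_.digamma ((k : ℂ) + 1)‖ ≤ ‖_root_.digamma 1‖ + k := by
  induction k with
  | zero => simp
  | succ n ih =>
    have h2 : ((n + 1 : ℕ) : ℂ) + 1 = (n : ℂ) + 2 := by push_cast; ring
    rw [h2, digamma_succ n]
    have hn : ‖(1 : ℂ) / ((n : ℂ) + 1)‖ ≤ 1 := by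
      rw [norm_div, norm_one]
      rw [div_le_one (by
        have : ((n : ℂ) + 1) = ((n + 1 : ℕ) : ℂ) := by push_cast; ring
        rw [this, Complex.norm_natCast]
        positivity)]
      have : ((n : ℂ) + 1) = ((n + 1 : ℕ) : ℂ) := by push_cast; ring
      rw [this, Complex.norm_natCast]
      exact_mod_cast Nat.one_le_iff_ne_zero.mpr (Nat.succ_ne_zero n)
    calc ‖_root_.digamma ((n : ℂ) + 1) + 1 / ((n : ℂ) + 1)‖
        ≤ ‖_root_.digamma ((n : ℂ) + 1)‖ + ‖(1:ℂ) / ((n : ℂ) + 1)‖ := norm_add_le _ _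
      _ ≤ (‖_root_.digamma 1‖ + n) + 1 := add_le_add ih hn
      _ = ‖_root_.digamma 1‖ + (n + 1 : ℕ) := by push_cast; ring

/-- coefficient of the infinite part of `Dm` -/
noncomputable def cc (m k : ℕ) : ℂ :=
  (_root_.digamma (k + 1) + _root_.digamma (k + m + 1)) / (k.factorial * (m + k).factorial)

lemma cc_bound (m k : ℕ) :
    ‖cc m k‖ ≤ (2 * ‖_root_.digamma 1‖ + m + 2) * 2 ^ k / k.factorial := by
  have hC : (0:ℝ) ≤ ‖_root_.digamma 1‖ := norm_nonneg _
  have h1 : ‖_root_.digamma ((k : ℂ) + 1)‖ ≤ ‖_root_.digamma 1‖ + k := digamma_nat_bound k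
  have h2 : ‖_root_.digamma ((k : ℂ) + m + 1)‖ ≤ ‖_root_.digamma 1‖ + (k + m) := by
    have := digamma_nat_bound (k + m)
    have e : ((k + m : ℕ) : ℂ) + 1 = (k : ℂ) + m + 1 := by push_cast; ring
    rw [e] at this
    push_cast at this ⊢
    linarith
  have hnum : ‖_root_.digamma ((k : ℂ) + 1) + _root_.digamma ((k : ℂ) + m + 1)‖
      ≤ 2 * ‖_root_.digamma 1‖ + 2 * k + m := by
    calc ‖_root_.digamma ((k : ℂ) + 1) + _root_.digamma ((k : ℂ) + m + 1)‖
        ≤ ‖_root_.digamma ((k : ℂ) + 1)‖ + ‖_root_.digamma ((k : ℂ) + m + 1)‖ := norm_add_le _ _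
      _ ≤ (‖_root_.digamma 1‖ + k) + (‖_root_.digamma 1‖ + (k + m)) := add_le_add h1 h2
      _ = 2 * ‖_root_.digamma 1‖ + 2 * k + m := by ring
  have hden : ‖((k.factorial : ℂ) * (m + k).factorial)‖
      = (k.factorial : ℝ) * (m + k).factorial := by
    rw [norm_mul, Complex.norm_natCast, Complex.norm_natCast]
  have hkfac : (0:ℝ) < k.factorial := by exact_mod_cast k.factorial_pos
  have hmkfac : (1:ℝ) ≤ (m + k).factorial := by exact_mod_cast (m + k).factorial_pos
  have hk2 : (2 * k : ℝ) ≤ 2 * 2 ^ k := by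
    have := Nat.lt_two_pow_self (n := k)
    have : (k : ℝ) ≤ 2 ^ k := by exact_mod_cast this.le
    linarith
  have hpow : (1:ℝ) ≤ 2 ^ k := one_le_pow₀ (by norm_num)
  rw [cc, norm_div, hden]
  calc ‖_root_.digamma ((k:ℂ) + 1) + _root_.digamma ((k:ℂ) + m + 1)‖ / ((k.factorial : ℝ) * (m + k).factorial)
      ≤ (2 * ‖_root_.digamma 1‖ + 2 * k + m) / (k.factorial : ℝ) := by
        apply div_le_div₀ (by positivity) hnum hkfac
        nlinarith [hkfac.le]
    _ ≤ (2 * ‖_root_.digamma 1‖ + m + 2) * 2 ^ k / k.factorial := by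
        gcongr
        nlinarith [Nat.cast_nonneg (α := ℝ) m]

lemma summable_base (a r : ℝ) : Summable fun k : ℕ => a * r ^ k / k.factorial := by
  have h := (Real.summable_pow_div_factorial r).mul_left a
  exact h.congr fun k => (mul_div_assoc a (r ^ k) _).symm

lemma summable_cc (m : ℕ) (z : ℂ) : Summable fun k : ℕ => cc m k * z ^ k := by
  apply Summable.of_norm
  apply Summable.of_nonneg_of_le (fun k => norm_nonneg _)
    (f := fun k => (2 * ‖_root_.digamma 1‖ + m + 2) * (2 * ‖z‖) ^ k / k.factorial)
  · intro k
    rw [norm_mul, norm_pow]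
    calc ‖cc m k‖ * ‖z‖ ^ k
        ≤ (2 * ‖_root_.digamma 1‖ + m + 2) * 2 ^ k / k.factorial * ‖z‖ ^ k := by
          gcongr
          exact cc_bound m k
      _ = (2 * ‖_root_.digamma 1‖ + m + 2) * (2 * ‖z‖) ^ k / k.factorial := by
          rw [mul_pow]; ring
  · exact summable_base _ _

lemma cc_deriv_bound (m k : ℕ) (z : ℂ) (M : ℝ) (hM : 1 ≤ M) (hzM : ‖z‖ ≤ M) :
    ‖cc m k * ((k : ℂ) * z ^ (k - 1))‖
      ≤ (2 * ‖_root_.digamma 1‖ + m + 2) * (4 * M) ^ k / k.factorial := by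
  have hM0 : (0:ℝ) ≤ M := le_trans zero_le_one hM
  have hz0 : (0:ℝ) ≤ ‖z‖ := norm_nonneg _
  have hA : (0:ℝ) ≤ 2 * ‖_root_.digamma 1‖ + m + 2 := by positivity
  have hzk : ‖z‖ ^ (k - 1) ≤ M ^ k := by
    calc ‖z‖ ^ (k - 1) ≤ M ^ (k - 1) := pow_le_pow_left₀ hz0 hzM _
      _ ≤ M ^ k := pow_le_pow_right₀ hM (Nat.sub_le k 1)
  have hk4 : (k : ℝ) * 2 ^ k ≤ 4 ^ k := by
    have h1 : (k : ℝ) ≤ 2 ^ k := by exact_mod_cast (Nat.lt_two_pow_self (n := k)).le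
    calc (k : ℝ) * 2 ^ k ≤ 2 ^ k * 2 ^ k := by
          apply mul_le_mul_of_nonneg_right h1 (by positivity)
      _ = 4 ^ k := by rw [← mul_pow]; norm_num
  have hfac : (0:ℝ) < k.factorial := by exact_mod_cast k.factorial_pos
  rw [norm_mul, norm_mul, norm_pow, Complex.norm_natCast]
  calc ‖cc m k‖ * ((k : ℝ) * ‖z‖ ^ (k - 1))
      ≤ (2 * ‖_root_.digamma 1‖ + m + 2) * 2 ^ k / k.factorial * ((k : ℝ) * M ^ k) := by
        apply mul_le_mul (cc_bound m k) (by gcongr) (by positivity) (by positivity)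
    _ = (2 * ‖_root_.digamma 1‖ + m + 2) * ((k : ℝ) * 2 ^ k) * M ^ k / k.factorial := by ring
    _ ≤ (2 * ‖_root_.digamma 1‖ + m + 2) * 4 ^ k * M ^ k / k.factorial := by gcongr
    _ = (2 * ‖_root_.digamma 1‖ + m + 2) * (4 * M) ^ k / k.factorial := by
        rw [mul_pow]; ring

lemma summable_cc_deriv (m : ℕ) (z : ℂ) :
    Summable fun k : ℕ => cc m k * ((k : ℂ) * z ^ (k - 1)) := by
  apply Summable.of_norm
  apply Summable.of_nonneg_of_le (fun k => norm_nonneg _)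
    (f := fun k => (2 * ‖_root_.digamma 1‖ + m + 2) * (4 * (‖z‖ + 1)) ^ k / k.factorial)
  · intro k
    exact cc_deriv_bound m k z (‖z‖ + 1) (by linarith [norm_nonneg z]) (by linarith)
  · exact summable_base _ _

lemma summable_F (m : ℕ) (z : ℂ) :
    Summable fun n : ℕ => z ^ n / (((m + n).factorial : ℂ) * n.factorial) := by
  apply Summable.of_norm
  apply Summable.of_nonneg_of_le (fun k => norm_nonneg _)
    (f := fun n => ‖z‖ ^ n / n.factorial)
  · intro n
    rw [norm_div, norm_pow, norm_mul, Complex.norm_natCast, Complex.norm_natCast]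
    apply div_le_div₀ (by positivity) le_rfl (by exact_mod_cast n.factorial_pos)
    calc (n.factorial : ℝ) = 1 * n.factorial := (one_mul _).symm
      _ ≤ ((m + n).factorial : ℝ) * n.factorial := by
          gcongr
          exact_mod_cast (m + n).factorial_pos
  · exact Real.summable_pow_div_factorial ‖z‖

lemma summable_B (m : ℕ) (z : ℂ) :
    Summable fun j : ℕ => z ^ j / (((m + 1 + j).factorial : ℂ) * (j + 1).factorial) := by
  apply Summable.of_norm
  apply Summable.of_nonneg_of_le (fun k => norm_nonneg _)
    (f := fun n => ‖z‖ ^ n / n.factorial)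
  · intro j
    rw [norm_div, norm_pow, norm_mul, Complex.norm_natCast, Complex.norm_natCast]
    apply div_le_div₀ (by positivity) le_rfl (by exact_mod_cast j.factorial_pos)
    calc (j.factorial : ℝ) = 1 * j.factorial := (one_mul _).symm
      _ ≤ ((m + 1 + j).factorial : ℝ) * (j + 1).factorial := by
          gcongr
          · exact_mod_cast (m + 1 + j).factorial_pos
          · exact Nat.le_succ j
  · exact Real.summable_pow_div_factorial ‖z‖

lemma cc_key (m j : ℕ) :
    cc m (j + 1) * ((j : ℂ) + 1)
      = cc (m + 1) j + 1 / (((m + 1 + j).factorial : ℂ) * (j + 1).factorial) := by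
  rw [cc, cc]
  rw [show ((j + 1 : ℕ) : ℂ) + 1 = (j : ℂ) + 2 by push_cast; ring]
  rw [show ((j + 1 : ℕ) : ℂ) + m + 1 = (j : ℂ) + (m + 1 : ℕ) + 1 by push_cast; ring]
  rw [show m + (j + 1) = m + 1 + j by omega]
  rw [digamma_succ j]
  have e5 : (((j + 1).factorial : ℂ)) = ((j : ℂ) + 1) * j.factorial := by
    rw [Nat.factorial_succ]; push_cast; ring
  have hj1 : ((j : ℂ) + 1) ≠ 0 := by
    have := Nat.cast_add_one_ne_zero (R := ℂ) j
    exact_mod_cast this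
  have hjf : ((j.factorial : ℂ)) ≠ 0 := by
    exact_mod_cast Nat.cast_ne_zero.mpr j.factorial_ne_zero
  have hmf : (((m + 1 + j).factorial : ℂ)) ≠ 0 := by
    exact_mod_cast Nat.cast_ne_zero.mpr (m + 1 + j).factorial_ne_zero
  rw [e5]
  field_simp
  ring

/-- coefficient of the finite part of `Dm` -/
noncomputable def aa (m k : ℕ) : ℂ :=
  (-1 : ℂ) ^ (k - 1) * (k - 1).factorial / (m - k).factorial

lemma finite_part (m : ℕ) (z : ℂ) :
    ∑ k ∈ Finset.Icc 1 m, aa m k * ((((-(k:ℤ)) : ℤ) : ℂ) * z ^ (-(k:ℤ) - 1))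
      = (∑ k ∈ Finset.Icc 1 (m+1), aa (m+1) k * z ^ (-(k:ℤ)))
        - 1 / (m.factorial : ℂ) * z⁻¹ := by
  rw [← Finset.Ico_add_one_right_eq_Icc, ← Finset.Ico_add_one_right_eq_Icc, Finset.sum_Ico_eq_sum_range,
    Finset.sum_Ico_eq_sum_range]
  simp only [Nat.succ_sub_one, Nat.add_sub_cancel]
  rw [Finset.sum_range_succ']
  have h0 : aa (m+1) (1+0) * z ^ (-(((1+0 : ℕ)) : ℤ)) = 1 / (m.factorial : ℂ) * z⁻¹ := by
    simp [aa, zpow_neg_one]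
  rw [h0, add_sub_cancel_right]
  apply Finset.sum_congr rfl
  intro i _
  have e1 : (1+i) - 1 = i := by omega
  have e2 : (1+(i+1)) - 1 = i + 1 := by omega
  have e3 : m + 1 - (1+(i+1)) = m - (1+i) := by omega
  have e4 : (-(((1+i):ℕ):ℤ) - 1) = -(((1+(i+1)):ℕ):ℤ) := by push_cast; ring
  simp only [aa, e1, e2, e3]
  rw [e4]
  have e5 : (((i+1).factorial : ℕ) : ℂ) = ((i:ℂ)+1) * i.factorial := by
    rw [Nat.factorial_succ]; push_cast; ring
  rw [e5, pow_succ]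
  push_cast
  ring

theorem Dm_deriv_recurrence (m : ℕ) (z : ℂ) (hz : z ≠ 0) :
    deriv (Dm m) z = Dm (m + 1) z - Fm m z / z := by
  have hzball : z ∈ Metric.ball (0:ℂ) (‖z‖ + 1) := by
    rw [Metric.mem_ball, dist_zero_right]; linarith
  have hS : HasDerivAt (fun x : ℂ => ∑ k ∈ Finset.Icc 1 m, aa m k * x ^ (-(k:ℤ)))
      (∑ k ∈ Finset.Icc 1 m, aa m k * ((((-(k:ℤ)) : ℤ) : ℂ) * z ^ (-(k:ℤ) - 1))) z :=
    HasDerivAt.fun_sum fun k _ => (hasDerivAt_zpow _ z (Or.inl hz)).const_mul (aa m k)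
  have hT : HasDerivAt (fun x : ℂ => ∑' k : ℕ, cc m k * x ^ k)
      (∑' k : ℕ, cc m k * ((k:ℂ) * z ^ (k - 1))) z := by
    apply hasDerivAt_tsum_of_isPreconnected
      (summable_base (2*‖_root_.digamma 1‖ + m + 2) (4*(‖z‖+1)))
      Metric.isOpen_ball (convex_ball (0:ℂ) (‖z‖+1)).isPreconnected
      (fun n y _ => (hasDerivAt_pow n y).const_mul (cc m n))
      (fun n y hy => ?_) hzball (summable_cc m z) hzball
    apply cc_deriv_bound m n y (‖z‖+1) (by linarith [norm_nonneg z])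
    rw [Metric.mem_ball, dist_zero_right] at hy
    linarith
  have hDeq : Dm m = fun x : ℂ =>
      (∑ k ∈ Finset.Icc 1 m, aa m k * x ^ (-(k:ℤ))) - ∑' k : ℕ, cc m k * x ^ k := rfl
  have hD' : HasDerivAt (Dm m)
      ((∑ k ∈ Finset.Icc 1 m, aa m k * ((((-(k:ℤ)) : ℤ) : ℂ) * z ^ (-(k:ℤ) - 1)))
        - ∑' k : ℕ, cc m k * ((k:ℂ) * z ^ (k - 1))) z := by
    rw [hDeq]; exact hS.sub hT
  rw [hD'.deriv, finite_part m z]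
  have hinf : (∑' k : ℕ, cc m k * ((k:ℂ) * z ^ (k - 1)))
      = (∑' j : ℕ, cc (m+1) j * z ^ j)
        + ∑' j : ℕ, z ^ j / (((m+1+j).factorial : ℂ) * (j+1).factorial) := by
    rw [Summable.tsum_eq_zero_add (summable_cc_deriv m z)]
    simp only [Nat.cast_zero, zero_mul, mul_zero, zero_add, Nat.add_sub_cancel]
    rw [← Summable.tsum_add (summable_cc (m+1) z) (summable_B m z)]
    apply tsum_congr
    intro j
    have hk := cc_key m j
    have e : ((j+1 : ℕ) : ℂ) = (j:ℂ)+1 := by push_cast; ring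
    rw [e]
    calc cc m (j+1) * (((j:ℂ)+1) * z ^ j) = (cc m (j+1) * ((j:ℂ)+1)) * z ^ j := by ring
      _ = (cc (m+1) j + 1 / (((m+1+j).factorial : ℂ) * (j+1).factorial)) * z ^ j := by rw [hk]
      _ = cc (m+1) j * z ^ j + z ^ j / (((m+1+j).factorial : ℂ) * (j+1).factorial) := by ring
  rw [hinf]
  have hF : Fm m z / z = 1 / ((m.factorial : ℂ) * z)
      + ∑' j : ℕ, z ^ j / (((m+1+j).factorial : ℂ) * (j+1).factorial) := by
    have h2 : ∀ j : ℕ, z ^ (j+1) / (((m+(j+1)).factorial : ℂ) * (j+1).factorial) / z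
        = z ^ j / (((m+1+j).factorial : ℂ) * (j+1).factorial) := by
      intro j
      rw [show m + (j+1) = m + 1 + j from by omega, pow_succ]
      have hD : (((m+1+j).factorial : ℂ) * (j+1).factorial) ≠ 0 := by
        apply mul_ne_zero <;> exact_mod_cast Nat.factorial_ne_zero _
      field_simp
    rw [Fm, Summable.tsum_eq_zero_add (summable_F m z), add_div, ← tsum_div_const, tsum_congr h2]
    congr 1
    rw [pow_zero, Nat.add_zero, Nat.factorial_zero, Nat.cast_one, mul_one, div_div]
  have hDm1 : Dm (m+1) z = (∑ k ∈ Finset.Icc 1 (m+1), aa (m+1) k * z ^ (-(k:ℤ)))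
      - ∑' k : ℕ, cc (m+1) k * z ^ k := rfl
  rw [hDm1, hF]
  have hmz : 1 / ((m.factorial : ℂ)) * z⁻¹ = 1 / ((m.factorial : ℂ) * z) := by
    rw [one_div, one_div, mul_inv]
  rw [hmz]
  ring
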